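/- arXiv:2603.00276 — 3 statements merged into one kernel-verified Lean document; each statement's English description precedes it below -/
import Mathlib

section
/- Let G be a group and let A be a unital associative ℂ-algebra equipped with a star ring structure such that star is conjugate-linear (StarRing A, Algebra ℂ A, StarModule ℂ A). Let u : G →* unitary A be a group homomorphism into the unitary group of A, and let ω : A →ₗ[ℂ] ℂ be a linear functional such that 0 ≤ ω (star a * a) for every a ∈ A (using ComplexOrder). Define φ : G → ℂ by φ s = ω (star (u s : A)). Then φ is positive definite: for every n : ℕ, every s : Fin n → G and every ξ : Fin n → ℂ one has 0 ≤ ∑ j, ∑ k, ξ j * (starRingEnd ℂ) (ξ k) * φ ((s k)⁻¹ * s j). Moreover, if ω 1 = 1 then φ 1 = 1. -/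
open ComplexOrder in
/-- If `u : G →* unitary A` is a unitary representation and `ω` is a positive linear
functional on `A`, then `φ s = ω (star (u s))` is a positive definite function,
normalized whenever `ω` is. -/
theorem stmt0 {G : Type*} [Group G] {A : Type*} [Ring A] [StarRing A] [Algebra ℂ A]
    [StarModule ℂ A] (u : G →* unitary A) (ω : A →ₗ[ℂ] ℂ)
    (hω : ∀ a : A, 0 ≤ ω (star a * a))
    (φ : G → ℂ) (hφ : ∀ s : G, φ s = ω (star (u s : A))) :
    (∀ (n : ℕ) (s : Fin n → G) (ξ : Fin n → ℂ),
      0 ≤ ∑ j, ∑ k, ξ j * (starRingEnd ℂ) (ξ k) * φ ((s k)⁻¹ * s j)) ∧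
    (ω 1 = 1 → φ 1 = 1) := by
  constructor
  · intro n s ξ
    set b : A := ∑ m, (starRingEnd ℂ) (ξ m) • (u (s m) : A) with hb
    have key : ∑ j, ∑ k, ξ j * (starRingEnd ℂ) (ξ k) * φ ((s k)⁻¹ * s j)
        = ω (star b * b) := by
      have : star b * b = ∑ j, ∑ k, (ξ j * (starRingEnd ℂ) (ξ k)) •
          (star (u (s j) : A) * (u (s k) : A)) := by
        rw [hb, star_sum, Finset.sum_mul_sum]
        refine Finset.sum_congr rfl fun j _ => Finset.sum_congr rfl fun k _ => ?_
        rw [star_smul, starRingEnd_apply, star_star, smul_mul_smul_comm, mul_smul]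
      rw [this, map_sum]
      refine Finset.sum_congr rfl fun j _ => ?_
      rw [map_sum]
      refine Finset.sum_congr rfl fun k _ => ?_
      rw [map_smul, smul_eq_mul, hφ]
      congr 2
      have : (u ((s k)⁻¹ * s j) : A) = (u (s k))⁻¹ * u (s j) := by
        rw [map_mul, map_inv]; rfl
      rw [this, star_mul]
      congr 1
      rw [← Unitary.coe_star, Unitary.star_eq_inv, inv_inv]
    rw [key]
    exact hω b
  · intro h1
    rw [hφ, map_one]
    simp [h1]
end

section
/- Let G be a finite group. The map φ ↦ ω_φ, where ω_φ : MonoidAlgebra ℂ G →ₗ[ℂ] ℂ is determined by ω_φ (single s a) = a * φ (s⁻¹), is a bijection from P₁(G) onto the set of algebraic states of MonoidAlgebra ℂ G, i.e., onto the set of linear functionals ω : MonoidAlgebra ℂ G →ₗ[ℂ] ℂ with ω 1 = 1 and 0 ≤ ω (star f * f) for all f (using ComplexOrder). Moreover this bijection preserves convex combinations: for φ, ψ ∈ P₁(G) and t ∈ [0,1] (t : ℝ), ω_{t•φ+(1−t)•ψ} = t•ω_φ + (1−t)•ω_ψ. -/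
/-- The star operation on `MonoidAlgebra ℂ G`, determined by
`star (single s a) = single s⁻¹ (conj a)`. -/
noncomputable instance monoidAlgebraStar {G : Type*} [Group G] :
    Star (MonoidAlgebra ℂ G) :=
  ⟨fun f => MonoidAlgebra.ofCoeff (Finsupp.equivMapDomain (Equiv.inv G)
      (Finsupp.mapRange (starRingEnd ℂ) (map_zero _) f.coeff))⟩

open ComplexOrder

/-- A function `φ : G → ℂ` is positive definite. -/
def IsPosDefFn {G : Type*} [Group G] (φ : G → ℂ) : Prop :=
  ∀ (n : ℕ) (s : Fin n → G) (ξ : Fin n → ℂ),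
    0 ≤ ∑ j, ∑ k, ξ j * (starRingEnd ℂ) (ξ k) * φ ((s k)⁻¹ * s j)

/-- `P₁(G)`: the set of positive definite functions `φ : G → ℂ` with `φ 1 = 1`. -/
def P1 (G : Type*) [Group G] : Set (G → ℂ) :=
  {φ | IsPosDefFn φ ∧ φ 1 = 1}

/-- The set of algebraic states of `MonoidAlgebra ℂ G`. -/
def algStates (G : Type*) [Group G] : Set (MonoidAlgebra ℂ G →ₗ[ℂ] ℂ) :=
  {ω | ω 1 = 1 ∧ ∀ f : MonoidAlgebra ℂ G, 0 ≤ ω (star f * f)}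

section Aux
variable {G : Type*} [Group G] [Fintype G]

/-- The linear functional `ω_φ` associated to `φ`. -/
noncomputable def OmegaMap (φ : G → ℂ) : MonoidAlgebra ℂ G →ₗ[ℂ] ℂ :=
  (Finsupp.linearCombination ℂ (fun s : G => φ s⁻¹)).comp
    (MonoidAlgebra.coeffLinearEquiv ℂ (S := ℂ) (M := G)).toLinearMap

lemma OmegaMap_single (φ : G → ℂ) (s : G) (a : ℂ) :
    OmegaMap φ (MonoidAlgebra.single s a) = a * φ s⁻¹ := by
  rw [OmegaMap, LinearMap.comp_apply]
  erw [Finsupp.linearCombination_single]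
  simp

lemma OmegaMap_apply (φ : G → ℂ) (f : MonoidAlgebra ℂ G) :
    OmegaMap φ f = ∑ s : G, f.coeff s * φ s⁻¹ := by
  rw [OmegaMap, LinearMap.comp_apply]
  erw [Finsupp.linearCombination_apply]
  rw [Finsupp.sum]
  rw [Finset.sum_subset (Finset.subset_univ _)]
  · simp [smul_eq_mul]
  · intro x _ hx
    simp [show f.coeff x = 0 from Finsupp.notMem_support_iff.mp hx]

omit [Fintype G] in
lemma star_apply' (f : MonoidAlgebra ℂ G) (x : G) :
    (star f).coeff x = (starRingEnd ℂ) (f.coeff x⁻¹) := rfl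

lemma decomp (f : MonoidAlgebra ℂ G) :
    f = ∑ s : G, MonoidAlgebra.single s (f.coeff s) := by
  classical
  ext t
  rw [MonoidAlgebra.coeff_sum, Finset.sum_apply']
  simp [MonoidAlgebra.single_apply, Finsupp.single_apply]

lemma star_decomp (f : MonoidAlgebra ℂ G) :
    star f = ∑ s : G, MonoidAlgebra.single s⁻¹ ((starRingEnd ℂ) (f.coeff s)) := by
  classical
  ext t
  rw [MonoidAlgebra.coeff_sum, Finset.sum_apply', star_apply']
  simp only [MonoidAlgebra.single_apply, inv_eq_iff_eq_inv]
  simp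

omit [Fintype G] in
lemma star_sum' {ι : Type*} (t : Finset ι) (h : ι → MonoidAlgebra ℂ G) :
    star (∑ i ∈ t, h i) = ∑ i ∈ t, star (h i) := by
  classical
  ext x
  rw [star_apply', MonoidAlgebra.coeff_sum, MonoidAlgebra.coeff_sum, Finset.sum_apply', Finset.sum_apply']
  simp only [star_apply']
  rw [map_sum]

omit [Fintype G] in
lemma star_single' (s : G) (a : ℂ) :
    star (MonoidAlgebra.single s a) = MonoidAlgebra.single s⁻¹ ((starRingEnd ℂ) a) := by
  classical
  ext x
  rw [star_apply']
  simp only [MonoidAlgebra.single_apply, apply_ite (starRingEnd ℂ), map_zero]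
  congr 1
  simp [eq_iff_iff, inv_eq_iff_eq_inv]

lemma OmegaMap_sum_mul_sum (φ : G → ℂ) (c d : G → ℂ) :
    OmegaMap φ ((∑ a : G, MonoidAlgebra.single a⁻¹ (c a)) *
        (∑ b : G, MonoidAlgebra.single b (d b)))
      = ∑ a : G, ∑ b : G, c a * d b * φ (b⁻¹ * a) := by
  rw [Finset.sum_mul_sum]
  simp only [MonoidAlgebra.single_mul_single]
  rw [map_sum]
  refine Finset.sum_congr rfl fun a _ => ?_
  rw [map_sum]
  refine Finset.sum_congr rfl fun b _ => ?_
  rw [OmegaMap_single, mul_inv_rev, inv_inv]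

omit [Fintype G] in
lemma omega_expansion (ω : MonoidAlgebra ℂ G →ₗ[ℂ] ℂ) {n : ℕ} (s : Fin n → G)
    (c : Fin n → ℂ) :
    ω (star (∑ j, MonoidAlgebra.single (s j) (c j)) *
        (∑ j, MonoidAlgebra.single (s j) (c j)))
      = ∑ j, ∑ k, (starRingEnd ℂ) (c j) * c k *
          ω (MonoidAlgebra.single ((s j)⁻¹ * s k) 1) := by
  rw [star_sum']
  simp only [star_single']
  rw [Finset.sum_mul_sum]
  simp only [MonoidAlgebra.single_mul_single]
  rw [map_sum]
  refine Finset.sum_congr rfl fun j _ => ?_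
  rw [map_sum]
  refine Finset.sum_congr rfl fun k _ => ?_
  rw [show MonoidAlgebra.single ((s j)⁻¹ * s k) ((starRingEnd ℂ) (c j) * c k)
      = ((starRingEnd ℂ) (c j) * c k) • MonoidAlgebra.single ((s j)⁻¹ * s k) (1:ℂ) from by
    rw [MonoidAlgebra.smul_single', mul_one]]
  rw [map_smul, smul_eq_mul]

lemma pos_forward (φ : G → ℂ) (hφ : IsPosDefFn φ) (f : MonoidAlgebra ℂ G) :
    0 ≤ OmegaMap φ (star f * f) := by
  have h1 : star f * f =
      (∑ a : G, MonoidAlgebra.single a⁻¹ ((starRingEnd ℂ) (f.coeff a))) *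
      (∑ b : G, MonoidAlgebra.single b (f.coeff b)) := by
    rw [← star_decomp, ← decomp]
  rw [h1, OmegaMap_sum_mul_sum]
  set e := (Fintype.equivFin G).symm with he
  have key := hφ (Fintype.card G) e (fun j => (starRingEnd ℂ) (f.coeff (e j)))
  refine le_of_le_of_eq key ?_
  rw [← Equiv.sum_comp e
    (fun a => ∑ b : G, (starRingEnd ℂ) (f.coeff a) * f.coeff b * φ (b⁻¹ * a))]
  refine Finset.sum_congr rfl fun j _ => ?_
  rw [← Equiv.sum_comp e
    (fun b => (starRingEnd ℂ) (f.coeff (e j)) * f.coeff b * φ (b⁻¹ * e j))]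
  refine Finset.sum_congr rfl fun k _ => ?_
  simp

omit [Fintype G] in
lemma pos_backward (ω : MonoidAlgebra ℂ G →ₗ[ℂ] ℂ)
    (hω : ∀ f : MonoidAlgebra ℂ G, 0 ≤ ω (star f * f)) :
    IsPosDefFn (fun s => ω (MonoidAlgebra.single s⁻¹ 1)) := by
  intro n s ξ
  have key := hω (∑ j, MonoidAlgebra.single (s j) ((starRingEnd ℂ) (ξ j)))
  rw [omega_expansion] at key
  refine le_of_le_of_eq key ?_
  refine Finset.sum_congr rfl fun j _ => Finset.sum_congr rfl fun k _ => ?_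
  simp [mul_inv_rev]

end Aux

/-- For a finite group `G`, the map `φ ↦ ω_φ`, where `ω_φ` is the linear functional
determined by `ω_φ (single s a) = a * φ s⁻¹`, is a bijection from `P₁(G)` onto the set
of algebraic states of `MonoidAlgebra ℂ G`, and it preserves convex combinations. -/
theorem stmt2 {G : Type*} [Group G] [Fintype G] :
    ∃ Ω : (G → ℂ) → (MonoidAlgebra ℂ G →ₗ[ℂ] ℂ),
      (∀ (φ : G → ℂ) (s : G) (a : ℂ), Ω φ (MonoidAlgebra.single s a) = a * φ s⁻¹) ∧
      Set.BijOn Ω (P1 G) (algStates G) ∧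
      (∀ φ ∈ P1 G, ∀ ψ ∈ P1 G, ∀ t : ℝ, 0 ≤ t → t ≤ 1 →
        Ω (t • φ + (1 - t) • ψ) = t • Ω φ + (1 - t) • Ω ψ) := by
  refine ⟨OmegaMap, fun φ s a => OmegaMap_single φ s a, ⟨?_, ?_, ?_⟩, ?_⟩
  · -- MapsTo
    intro φ hφ
    refine ⟨?_, fun f => pos_forward φ hφ.1 f⟩
    rw [MonoidAlgebra.one_def, OmegaMap_single, inv_one, hφ.2, mul_one]
  · -- InjOn
    intro φ _ ψ _ h
    funext s
    have h2 := congrArg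
      (fun L : MonoidAlgebra ℂ G →ₗ[ℂ] ℂ => L (MonoidAlgebra.single s⁻¹ 1)) h
    simpa [OmegaMap_single] using h2
  · -- SurjOn
    intro ω hω
    refine ⟨fun s => ω (MonoidAlgebra.single s⁻¹ 1), ⟨pos_backward ω hω.2, ?_⟩, ?_⟩
    · simpa [MonoidAlgebra.one_def] using hω.1
    · refine LinearMap.ext fun f => ?_
      conv_lhs => rw [decomp f]
      conv_rhs => rw [decomp f]
      rw [map_sum, map_sum]
      refine Finset.sum_congr rfl fun s _ => ?_
      rw [OmegaMap_single, inv_inv]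
      rw [show MonoidAlgebra.single s (f.coeff s) = (f.coeff s) • MonoidAlgebra.single s (1:ℂ) from by
        rw [MonoidAlgebra.smul_single', mul_one]]
      rw [map_smul, smul_eq_mul]
  · -- convexity
    intro φ _ ψ _ t _ _
    refine LinearMap.ext fun f => ?_
    rw [OmegaMap_apply]
    simp only [LinearMap.add_apply, LinearMap.smul_apply, OmegaMap_apply, Pi.add_apply,
      Pi.smul_apply, Complex.real_smul, Finset.mul_sum, smul_eq_mul]
    rw [← Finset.sum_add_distrib]
    refine Finset.sum_congr rfl fun s _ => ?_
    push_cast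
    ring
end

section
/- Let ι be a type, d : ι → ℕ with 0 < d i for every i, and let A = Π i, Matrix (Fin (d i)) (Fin (d i)) ℂ with componentwise multiplication and componentwise conjugate-transpose star. For i₀ : ι let p^{i₀} ∈ A be given by p^{i₀} j = if j = i₀ then 1 else 0. Then an element p ∈ A is a minimal nonzero central projection — i.e., p ≠ 0, p * p = p, star p = p, p * x = x * p for all x ∈ A, and every q ∈ A satisfying q * q = q, star q = q, q * x = x * q for all x, and q * p = q is equal to 0 or to p — if and only if there exists i₀ such that p = p^{i₀}. -/
/-- A matrix over ℂ commuting with all matrices and idempotent is 0 or 1. -/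
lemma aux_zero_or_one {n : ℕ} (hn : 0 < n) (M : Matrix (Fin n) (Fin n) ℂ)
    (hc : ∀ x : Matrix (Fin n) (Fin n) ℂ, M * x = x * M) (hi : M * M = M) :
    M = 0 ∨ M = 1 := by
  obtain ⟨c, rfl⟩ := Matrix.mem_range_scalar_iff_commute_single'.mpr
    (fun i j => (hc _).symm)
  have : Nonempty (Fin n) := ⟨⟨0, hn⟩⟩
  have hcc : c * c = c := by
    have := hi
    rw [← map_mul] at this
    exact (Matrix.scalar_inj).mp this
  have h01 : c * (c - 1) = 0 := by linear_combination hcc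
  rcases mul_eq_zero.mp h01 with h | h
  · left; simp [h]
  · right; have : c = 1 := by linear_combination h
    simp [this]

lemma aux_one_ne_zero {n : ℕ} (hn : 0 < n) : (1 : Matrix (Fin n) (Fin n) ℂ) ≠ 0 := by
  intro h
  have := congrFun (congrFun h ⟨0, hn⟩) ⟨0, hn⟩
  simp [Matrix.one_apply] at this

/-- In the product star algebra `A = Π i, Matrix (Fin (d i)) (Fin (d i)) ℂ` (with
componentwise product and conjugate-transpose star), an element `p` is a minimal
nonzero central projection if and only if `p` is one of the canonical central
projections `p^{i₀} j = if j = i₀ then 1 else 0`. -/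
theorem stmt12 {ι : Type*} [DecidableEq ι] (d : ι → ℕ) (hd : ∀ i, 0 < d i)
    (p : ∀ i, Matrix (Fin (d i)) (Fin (d i)) ℂ) :
    (p ≠ 0 ∧ p * p = p ∧ star p = p ∧
      (∀ x : ∀ i, Matrix (Fin (d i)) (Fin (d i)) ℂ, p * x = x * p) ∧
      (∀ q : ∀ i, Matrix (Fin (d i)) (Fin (d i)) ℂ,
        q * q = q → star q = q →
        (∀ x : ∀ i, Matrix (Fin (d i)) (Fin (d i)) ℂ, q * x = x * q) →
        q * p = q → q = 0 ∨ q = p)) ↔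
    ∃ i₀ : ι, p = fun j => if j = i₀ then 1 else 0 := by
  -- componentwise centrality
  have central_comp : ∀ (r : ∀ i, Matrix (Fin (d i)) (Fin (d i)) ℂ),
      (∀ x, r * x = x * r) → ∀ i (m : Matrix (Fin (d i)) (Fin (d i)) ℂ),
      r i * m = m * r i := by
    intro r hr i m
    have := congrFun (hr (Function.update 0 i m)) i
    simpa using this
  constructor
  · rintro ⟨hne, hidem, hstar, hcen, hmin⟩
    have hcomp : ∀ i, p i = 0 ∨ p i = 1 := fun i =>
      aux_zero_or_one (hd i) (p i) (central_comp p hcen i) (congrFun hidem i)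
    obtain ⟨i₀, hi₀⟩ : ∃ i, p i ≠ 0 := by
      by_contra h
      push_neg at h
      exact hne (funext h)
    have hpi₀ : p i₀ = 1 := (hcomp i₀).resolve_left hi₀
    set q : ∀ i, Matrix (Fin (d i)) (Fin (d i)) ℂ :=
      fun j => if j = i₀ then 1 else 0 with hq
    refine ⟨i₀, ?_⟩
    have hq1 : q * q = q := by
      funext j; by_cases h : j = i₀ <;> simp [hq, h]
    have hq2 : star q = q := by
      funext j; by_cases h : j = i₀ <;> simp [hq, h]
    have hq3 : ∀ x, q * x = x * q := by
      intro x; funext j; by_cases h : j = i₀ <;> simp [hq, h]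
    have hq4 : q * p = q := by
      funext j
      by_cases h : j = i₀
      · subst h; simp [hq, hpi₀]
      · simp [hq, h]
    rcases hmin q hq1 hq2 hq3 hq4 with h | h
    · exfalso
      have := congrFun h i₀
      simp [hq] at this
      exact aux_one_ne_zero (hd i₀) this
    · exact h.symm
  · rintro ⟨i₀, rfl⟩
    refine ⟨?_, ?_, ?_, ?_, ?_⟩
    · intro h
      have := congrFun h i₀
      simp at this
      exact aux_one_ne_zero (hd i₀) this
    · funext j; by_cases h : j = i₀ <;> simp [h]
    · funext j; by_cases h : j = i₀ <;> simp [h]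
    · intro x; funext j; by_cases h : j = i₀ <;> simp [h]
    · intro q hq1 hq2 hq3 hq4
      have hcomp : ∀ i, q i = 0 ∨ q i = 1 := fun i =>
        aux_zero_or_one (hd i) (q i) (central_comp q hq3 i) (congrFun hq1 i)
      have hzero : ∀ j, j ≠ i₀ → q j = 0 := by
        intro j hj
        have := congrFun hq4 j
        simpa [hj] using this.symm
      rcases hcomp i₀ with h | h
      · left
        funext j
        by_cases hji : j = i₀
        · subst hji; exact h
        · exact hzero j hji
      · right
        funext j
        by_cases hji : j = i₀
        · subst hji; simpa using h
        · simpa [hji] using hzero j hji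
end
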